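/- Let q = q₀ + q₁i + q₂j + q₃k be a quaternion and set ρ = √(q₁² + q₂² + q₃²). Then q belongs to the quaternionic Mandelbrot set (i.e., the iterates of P_q(z) = z² + q starting at 0 are bounded) if and only if the complex number c = q₀ + ρi belongs to the classical Mandelbrot set. -/

import Mathlib

open scoped Quaternion

noncomputable def phiQ (a b d : ℝ) (z : ℂ) : ℍ[ℝ] := ⟨z.re, z.im * a, z.im * b, z.im * d⟩

lemma phiQ_step (a b d : ℝ) (h : a^2 + b^2 + d^2 = 1) (c z : ℂ) :
    phiQ a b d (z^2 + c) = (phiQ a b d z)^2 + phiQ a b d c := by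
  ext <;>
    simp [pow_two, Quaternion.re_mul,
      Quaternion.imI_mul, Quaternion.imJ_mul, Quaternion.imK_mul] <;>
    simp [phiQ, pow_two, Complex.mul_re, Complex.mul_im] <;> nlinarith [h]

lemma phiQ_norm (a b d : ℝ) (h : a^2 + b^2 + d^2 = 1) (z : ℂ) :
    ‖phiQ a b d z‖ = ‖z‖ := by
  refine (mul_self_inj (norm_nonneg _) (norm_nonneg _)).1 ?_
  rw [← Quaternion.normSq_eq_norm_mul_self, ← pow_two, Complex.sq_norm]
  rw [Quaternion.normSq_def']
  simp only [phiQ, Complex.normSq_apply]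
  nlinarith [h]

lemma phiQ_iter (a b d : ℝ) (h : a^2 + b^2 + d^2 = 1) (c : ℂ) (n : ℕ) :
    (fun w : ℍ[ℝ] => w ^ 2 + phiQ a b d c)^[n] 0 =
      phiQ a b d ((fun z : ℂ => z ^ 2 + c)^[n] 0) := by
  induction n with
  | zero =>
      simp only [Function.iterate_zero, id]
      ext <;> simp [phiQ]
  | succ n ih =>
      rw [Function.iterate_succ_apply', Function.iterate_succ_apply', ih,
        ← phiQ_step a b d h]

/-- A quaternion q is in the quaternionic Mandelbrot set iff the complex number
q.re + ρ i, with ρ the norm of the vector part, is in the classical Mandelbrot set. -/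
theorem quaternionic_mandelbrot_iff (q : ℍ[ℝ]) :
    Bornology.IsBounded
        (Set.range fun n : ℕ => (fun z : ℍ[ℝ] => z ^ 2 + q)^[n] 0) ↔
      Bornology.IsBounded
        (Set.range fun n : ℕ =>
          (fun z : ℂ => z ^ 2 +
            ((q.re : ℂ) +
              (Real.sqrt (q.imI ^ 2 + q.imJ ^ 2 + q.imK ^ 2) : ℝ) * Complex.I))^[n] 0) := by
  set ρ : ℝ := Real.sqrt (q.imI ^ 2 + q.imJ ^ 2 + q.imK ^ 2) with hρ
  set c : ℂ := (q.re : ℂ) + (ρ : ℝ) * Complex.I with hc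
  have hcre : c.re = q.re := by simp [hc]
  have hcim : c.im = ρ := by simp [hc]
  have hρsq : ρ ^ 2 = q.imI ^ 2 + q.imJ ^ 2 + q.imK ^ 2 := by
    rw [hρ]; exact Real.sq_sqrt (by positivity)
  obtain ⟨a, b, d, habd, hq⟩ : ∃ a b d : ℝ, a ^ 2 + b ^ 2 + d ^ 2 = 1 ∧
      q = phiQ a b d c := by
    by_cases h0 : ρ = 0
    · have hsum : q.imI ^ 2 + q.imJ ^ 2 + q.imK ^ 2 = 0 := by rw [← hρsq, h0]; ring
      have h1 : q.imI = 0 := by nlinarith [sq_nonneg q.imI, sq_nonneg q.imJ, sq_nonneg q.imK]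
      have h2 : q.imJ = 0 := by nlinarith [sq_nonneg q.imI, sq_nonneg q.imJ, sq_nonneg q.imK]
      have h3 : q.imK = 0 := by nlinarith [sq_nonneg q.imI, sq_nonneg q.imJ, sq_nonneg q.imK]
      exact ⟨1, 0, 0, by ring, by ext <;> simp [phiQ, hcre, hcim, h0, h1, h2, h3]⟩
    · refine ⟨q.imI / ρ, q.imJ / ρ, q.imK / ρ, ?_, ?_⟩
      · field_simp
        linarith [hρsq]
      · ext <;> simp only [phiQ, hcre, hcim] <;> (try field_simp)
  have hrange :
      (Set.range fun n : ℕ => (fun z : ℍ[ℝ] => z ^ 2 + q)^[n] 0) =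
        phiQ a b d '' (Set.range fun n : ℕ => (fun z : ℂ => z ^ 2 + c)^[n] 0) := by
    rw [← Set.range_comp]
    have : (fun n : ℕ => (fun z : ℍ[ℝ] => z ^ 2 + q)^[n] 0) =
        (phiQ a b d ∘ fun n : ℕ => (fun z : ℂ => z ^ 2 + c)^[n] 0) := by
      funext n
      rw [hq]
      exact phiQ_iter a b d habd c n
    rw [this]
  rw [hrange]
  constructor
  · intro h
    rw [isBounded_iff_forall_norm_le] at h ⊢
    obtain ⟨C, hC⟩ := h
    refine ⟨C, fun x hx => ?_⟩
    have := hC (phiQ a b d x) (Set.mem_image_of_mem _ hx)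
    rwa [phiQ_norm a b d habd] at this
  · intro h
    rw [isBounded_iff_forall_norm_le] at h ⊢
    obtain ⟨C, hC⟩ := h
    refine ⟨C, ?_⟩
    rintro y ⟨x, hx, rfl⟩
    rw [phiQ_norm a b d habd]
    exact hC x hx
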